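/- The real Lie subalgebra of 4×4 complex matrices generated by {i·σz⊗σz, i·σx⊗I₂, i·I₂⊗σx} is isomorphic, as a Lie algebra over ℝ, to so(4), the Lie algebra of 4×4 real skew-symmetric matrices. -/

import Mathlib

open Matrix Kronecker

attribute [local instance 100] LieRing.ofAssociativeRing

/-- The Pauli matrix `σx`. -/
noncomputable def σx : Matrix (Fin 2) (Fin 2) ℂ := !![0, 1; 1, 0]

/-- The Pauli matrix `σy`. -/
noncomputable def σy : Matrix (Fin 2) (Fin 2) ℂ := !![0, -Complex.I; Complex.I, 0]

/-- The Pauli matrix `σz`. -/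
noncomputable def σz : Matrix (Fin 2) (Fin 2) ℂ := !![1, 0; 0, -1]

/-- The 2×2 identity matrix. -/
noncomputable def I₂ : Matrix (Fin 2) (Fin 2) ℂ := 1

namespace TwoQubitSO4

abbrev M4 := Matrix (Fin 2 × Fin 2) (Fin 2 × Fin 2) ℂ

lemma I3 : Complex.I ^ 3 = -Complex.I := by rw [pow_succ, Complex.I_sq]; ring

noncomputable def e1 : M4 := (Complex.I / 2) • (σz ⊗ₖ σz)

noncomputable def e2 : M4 := (Complex.I / 2) • (σx ⊗ₖ I₂)

noncomputable def e3 : M4 := (Complex.I / 2) • (I₂ ⊗ₖ σx)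

noncomputable def e4 : M4 := (Complex.I / 2) • (σy ⊗ₖ σz)

noncomputable def e5 : M4 := (Complex.I / 2) • (σz ⊗ₖ σy)

noncomputable def e6 : M4 := (Complex.I / 2) • (σy ⊗ₖ σy)

lemma br_1_2 : ⁅e1, e2⁆ = -e4 := by
  rw [Ring.lie_def]
  ext ⟨i1, i2⟩ ⟨j1, j2⟩
  fin_cases i1 <;> fin_cases i2 <;> fin_cases j1 <;> fin_cases j2 <;>
    simp [e1, e2, e3, e4, e5, e6, σx, σy, σz, I₂, Matrix.mul_apply, Fintype.sum_prod_type,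
      Fin.sum_univ_two, Matrix.one_apply] <;> ring_nf <;> simp [I3] <;> ring_nf

lemma br_1_3 : ⁅e1, e3⁆ = -e5 := by
  rw [Ring.lie_def]
  ext ⟨i1, i2⟩ ⟨j1, j2⟩
  fin_cases i1 <;> fin_cases i2 <;> fin_cases j1 <;> fin_cases j2 <;>
    simp [e1, e2, e3, e4, e5, e6, σx, σy, σz, I₂, Matrix.mul_apply, Fintype.sum_prod_type,
      Fin.sum_univ_two, Matrix.one_apply] <;> ring_nf <;> simp [I3] <;> ring_nf

lemma br_1_4 : ⁅e1, e4⁆ = e2 := by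
  rw [Ring.lie_def]
  ext ⟨i1, i2⟩ ⟨j1, j2⟩
  fin_cases i1 <;> fin_cases i2 <;> fin_cases j1 <;> fin_cases j2 <;>
    simp [e1, e2, e3, e4, e5, e6, σx, σy, σz, I₂, Matrix.mul_apply, Fintype.sum_prod_type,
      Fin.sum_univ_two, Matrix.one_apply] <;> ring_nf <;> simp [I3] <;> ring_nf

lemma br_1_5 : ⁅e1, e5⁆ = e3 := by
  rw [Ring.lie_def]
  ext ⟨i1, i2⟩ ⟨j1, j2⟩
  fin_cases i1 <;> fin_cases i2 <;> fin_cases j1 <;> fin_cases j2 <;>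
    simp [e1, e2, e3, e4, e5, e6, σx, σy, σz, I₂, Matrix.mul_apply, Fintype.sum_prod_type,
      Fin.sum_univ_two, Matrix.one_apply] <;> ring_nf <;> simp [I3] <;> ring_nf

lemma br_1_6 : ⁅e1, e6⁆ = 0 := by
  rw [Ring.lie_def]
  ext ⟨i1, i2⟩ ⟨j1, j2⟩
  fin_cases i1 <;> fin_cases i2 <;> fin_cases j1 <;> fin_cases j2 <;>
    simp [e1, e2, e3, e4, e5, e6, σx, σy, σz, I₂, Matrix.mul_apply, Fintype.sum_prod_type,
      Fin.sum_univ_two, Matrix.one_apply] <;> ring_nf <;> simp [I3] <;> ring_nf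

lemma br_2_3 : ⁅e2, e3⁆ = 0 := by
  rw [Ring.lie_def]
  ext ⟨i1, i2⟩ ⟨j1, j2⟩
  fin_cases i1 <;> fin_cases i2 <;> fin_cases j1 <;> fin_cases j2 <;>
    simp [e1, e2, e3, e4, e5, e6, σx, σy, σz, I₂, Matrix.mul_apply, Fintype.sum_prod_type,
      Fin.sum_univ_two, Matrix.one_apply] <;> ring_nf <;> simp [I3] <;> ring_nf

lemma br_2_4 : ⁅e2, e4⁆ = -e1 := by
  rw [Ring.lie_def]
  ext ⟨i1, i2⟩ ⟨j1, j2⟩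
  fin_cases i1 <;> fin_cases i2 <;> fin_cases j1 <;> fin_cases j2 <;>
    simp [e1, e2, e3, e4, e5, e6, σx, σy, σz, I₂, Matrix.mul_apply, Fintype.sum_prod_type,
      Fin.sum_univ_two, Matrix.one_apply] <;> ring_nf <;> simp [I3] <;> ring_nf

lemma br_2_5 : ⁅e2, e5⁆ = e6 := by
  rw [Ring.lie_def]
  ext ⟨i1, i2⟩ ⟨j1, j2⟩
  fin_cases i1 <;> fin_cases i2 <;> fin_cases j1 <;> fin_cases j2 <;>
    simp [e1, e2, e3, e4, e5, e6, σx, σy, σz, I₂, Matrix.mul_apply, Fintype.sum_prod_type,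
      Fin.sum_univ_two, Matrix.one_apply] <;> ring_nf <;> simp [I3] <;> ring_nf

lemma br_2_6 : ⁅e2, e6⁆ = -e5 := by
  rw [Ring.lie_def]
  ext ⟨i1, i2⟩ ⟨j1, j2⟩
  fin_cases i1 <;> fin_cases i2 <;> fin_cases j1 <;> fin_cases j2 <;>
    simp [e1, e2, e3, e4, e5, e6, σx, σy, σz, I₂, Matrix.mul_apply, Fintype.sum_prod_type,
      Fin.sum_univ_two, Matrix.one_apply] <;> ring_nf <;> simp [I3] <;> ring_nf

lemma br_3_4 : ⁅e3, e4⁆ = e6 := by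
  rw [Ring.lie_def]
  ext ⟨i1, i2⟩ ⟨j1, j2⟩
  fin_cases i1 <;> fin_cases i2 <;> fin_cases j1 <;> fin_cases j2 <;>
    simp [e1, e2, e3, e4, e5, e6, σx, σy, σz, I₂, Matrix.mul_apply, Fintype.sum_prod_type,
      Fin.sum_univ_two, Matrix.one_apply] <;> ring_nf <;> simp [I3] <;> ring_nf

lemma br_3_5 : ⁅e3, e5⁆ = -e1 := by
  rw [Ring.lie_def]
  ext ⟨i1, i2⟩ ⟨j1, j2⟩
  fin_cases i1 <;> fin_cases i2 <;> fin_cases j1 <;> fin_cases j2 <;>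
    simp [e1, e2, e3, e4, e5, e6, σx, σy, σz, I₂, Matrix.mul_apply, Fintype.sum_prod_type,
      Fin.sum_univ_two, Matrix.one_apply] <;> ring_nf <;> simp [I3] <;> ring_nf

lemma br_3_6 : ⁅e3, e6⁆ = -e4 := by
  rw [Ring.lie_def]
  ext ⟨i1, i2⟩ ⟨j1, j2⟩
  fin_cases i1 <;> fin_cases i2 <;> fin_cases j1 <;> fin_cases j2 <;>
    simp [e1, e2, e3, e4, e5, e6, σx, σy, σz, I₂, Matrix.mul_apply, Fintype.sum_prod_type,
      Fin.sum_univ_two, Matrix.one_apply] <;> ring_nf <;> simp [I3] <;> ring_nf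

lemma br_4_5 : ⁅e4, e5⁆ = 0 := by
  rw [Ring.lie_def]
  ext ⟨i1, i2⟩ ⟨j1, j2⟩
  fin_cases i1 <;> fin_cases i2 <;> fin_cases j1 <;> fin_cases j2 <;>
    simp [e1, e2, e3, e4, e5, e6, σx, σy, σz, I₂, Matrix.mul_apply, Fintype.sum_prod_type,
      Fin.sum_univ_two, Matrix.one_apply] <;> ring_nf <;> simp [I3] <;> ring_nf

lemma br_4_6 : ⁅e4, e6⁆ = e3 := by
  rw [Ring.lie_def]
  ext ⟨i1, i2⟩ ⟨j1, j2⟩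
  fin_cases i1 <;> fin_cases i2 <;> fin_cases j1 <;> fin_cases j2 <;>
    simp [e1, e2, e3, e4, e5, e6, σx, σy, σz, I₂, Matrix.mul_apply, Fintype.sum_prod_type,
      Fin.sum_univ_two, Matrix.one_apply] <;> ring_nf <;> simp [I3] <;> ring_nf

lemma br_5_6 : ⁅e5, e6⁆ = e2 := by
  rw [Ring.lie_def]
  ext ⟨i1, i2⟩ ⟨j1, j2⟩
  fin_cases i1 <;> fin_cases i2 <;> fin_cases j1 <;> fin_cases j2 <;>
    simp [e1, e2, e3, e4, e5, e6, σx, σy, σz, I₂, Matrix.mul_apply, Fintype.sum_prod_type,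
      Fin.sum_univ_two, Matrix.one_apply] <;> ring_nf <;> simp [I3] <;> ring_nf

lemma br_2_1 : ⁅e2, e1⁆ = e4 := by
  rw [← lie_skew, br_1_2]; try simp

lemma br_3_1 : ⁅e3, e1⁆ = e5 := by
  rw [← lie_skew, br_1_3]; try simp

lemma br_4_1 : ⁅e4, e1⁆ = -e2 := by
  rw [← lie_skew, br_1_4]; try simp

lemma br_5_1 : ⁅e5, e1⁆ = -e3 := by
  rw [← lie_skew, br_1_5]; try simp

lemma br_6_1 : ⁅e6, e1⁆ = 0 := by
  rw [← lie_skew, br_1_6]; try simp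

lemma br_3_2 : ⁅e3, e2⁆ = 0 := by
  rw [← lie_skew, br_2_3]; try simp

lemma br_4_2 : ⁅e4, e2⁆ = e1 := by
  rw [← lie_skew, br_2_4]; try simp

lemma br_5_2 : ⁅e5, e2⁆ = -e6 := by
  rw [← lie_skew, br_2_5]; try simp

lemma br_6_2 : ⁅e6, e2⁆ = e5 := by
  rw [← lie_skew, br_2_6]; try simp

lemma br_4_3 : ⁅e4, e3⁆ = -e6 := by
  rw [← lie_skew, br_3_4]; try simp

lemma br_5_3 : ⁅e5, e3⁆ = e1 := by
  rw [← lie_skew, br_3_5]; try simp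

lemma br_6_3 : ⁅e6, e3⁆ = e4 := by
  rw [← lie_skew, br_3_6]; try simp

lemma br_5_4 : ⁅e5, e4⁆ = 0 := by
  rw [← lie_skew, br_4_5]; try simp

lemma br_6_4 : ⁅e6, e4⁆ = -e3 := by
  rw [← lie_skew, br_4_6]; try simp

lemma br_6_5 : ⁅e6, e5⁆ = -e2 := by
  rw [← lie_skew, br_5_6]; try simp

noncomputable def gSet : Set M4 := {e1, e2, e3, e4, e5, e6}

noncomputable def Kspan : Submodule ℝ M4 := Submodule.span ℝ gSet

lemma me1 : e1 ∈ Kspan := Submodule.subset_span (by simp [gSet])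
lemma me2 : e2 ∈ Kspan := Submodule.subset_span (by simp [gSet])
lemma me3 : e3 ∈ Kspan := Submodule.subset_span (by simp [gSet])
lemma me4 : e4 ∈ Kspan := Submodule.subset_span (by simp [gSet])
lemma me5 : e5 ∈ Kspan := Submodule.subset_span (by simp [gSet])
lemma me6 : e6 ∈ Kspan := Submodule.subset_span (by simp [gSet])

lemma br_mem : ∀ x ∈ gSet, ∀ y ∈ gSet, ⁅x, y⁆ ∈ Kspan := by
  intro x hx y hy
  simp only [gSet, Set.mem_insert_iff, Set.mem_singleton_iff] at hx hy
  rcases hx with rfl | rfl | rfl | rfl | rfl | rfl <;>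
    rcases hy with rfl | rfl | rfl | rfl | rfl | rfl <;>
    simp only [lie_self, br_1_2, br_1_3, br_1_4, br_1_5, br_1_6, br_2_3, br_2_4, br_2_5,
      br_2_6, br_3_4, br_3_5, br_3_6, br_4_5, br_4_6, br_5_6, br_2_1, br_3_1, br_4_1,
      br_5_1, br_6_1, br_3_2, br_4_2, br_5_2, br_6_2, br_4_3, br_5_3, br_6_3, br_5_4,
      br_6_4, br_6_5] <;>
    first
      | exact Kspan.zero_mem
      | exact me1 | exact me2 | exact me3 | exact me4 | exact me5 | exact me6
      | exact neg_mem me1 | exact neg_mem me2 | exact neg_mem me3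
      | exact neg_mem me4 | exact neg_mem me5 | exact neg_mem me6

noncomputable def K : LieSubalgebra ℝ M4 :=
  { Kspan with
    lie_mem' := fun {x y} hx hy => by
      refine Submodule.span_induction₂
        (p := fun a b _ _ => ⁅a, b⁆ ∈ Kspan)
        (fun a b ha hb => br_mem a ha b hb)
        (fun b _ => by change ⁅(0:M4), b⁆ ∈ Kspan; rw [zero_lie]; exact Kspan.zero_mem)
        (fun a _ => by change ⁅a, (0:M4)⁆ ∈ Kspan; rw [lie_zero]; exact Kspan.zero_mem)
        (fun a b c _ _ _ h1 h2 => by change ⁅a + b, c⁆ ∈ Kspan; rw [add_lie]; exact Kspan.add_mem h1 h2)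
        (fun a b c _ _ _ h1 h2 => by change ⁅a, b + c⁆ ∈ Kspan; rw [lie_add]; exact Kspan.add_mem h1 h2)
        (fun r a b _ _ h => by change ⁅r • a, b⁆ ∈ Kspan; rw [smul_lie]; exact Kspan.smul_mem r h)
        (fun r a b _ _ h => by change ⁅a, r • b⁆ ∈ Kspan; rw [lie_smul]; exact Kspan.smul_mem r h)
        hx hy }

lemma mem_K {x : M4} : x ∈ K ↔ x ∈ Kspan := Iff.rfl

lemma e1_eq : e1 = (1 / 2 : ℝ) • (Complex.I • (σz ⊗ₖ σz)) := by
  rw [e1, ← smul_assoc]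
  norm_num [Complex.real_smul]
  congr 1
  ring
lemma e2_eq : e2 = (1 / 2 : ℝ) • (Complex.I • (σx ⊗ₖ I₂)) := by
  rw [e2, ← smul_assoc]
  norm_num [Complex.real_smul]
  congr 1
  ring
lemma e3_eq : e3 = (1 / 2 : ℝ) • (Complex.I • (I₂ ⊗ₖ σx)) := by
  rw [e3, ← smul_assoc]
  norm_num [Complex.real_smul]
  congr 1
  ring

lemma gen1 : Complex.I • (σz ⊗ₖ σz) = (2 : ℝ) • e1 := by
  rw [e1, ← smul_assoc]
  norm_num [Complex.real_smul]
  congr 1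
  ring
lemma gen2 : Complex.I • (σx ⊗ₖ I₂) = (2 : ℝ) • e2 := by
  rw [e2, ← smul_assoc]
  norm_num [Complex.real_smul]
  congr 1
  ring
lemma gen3 : Complex.I • (I₂ ⊗ₖ σx) = (2 : ℝ) • e3 := by
  rw [e3, ← smul_assoc]
  norm_num [Complex.real_smul]
  congr 1
  ring

lemma lieSpan_eq :
    LieSubalgebra.lieSpan ℝ M4
      {Complex.I • (σz ⊗ₖ σz), Complex.I • (σx ⊗ₖ I₂), Complex.I • (I₂ ⊗ₖ σx)} = K := by
  apply le_antisymm
  · rw [LieSubalgebra.lieSpan_le]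
    intro x hx
    simp only [Set.mem_insert_iff, Set.mem_singleton_iff] at hx
    rcases hx with rfl | rfl | rfl
    · rw [gen1]; exact Kspan.smul_mem _ me1
    · rw [gen2]; exact Kspan.smul_mem _ me2
    · rw [gen3]; exact Kspan.smul_mem _ me3
  · set L := LieSubalgebra.lieSpan ℝ M4
      {Complex.I • (σz ⊗ₖ σz), Complex.I • (σx ⊗ₖ I₂), Complex.I • (I₂ ⊗ₖ σx)} with hL
    have h1 : Complex.I • (σz ⊗ₖ σz) ∈ L := LieSubalgebra.subset_lieSpan (by simp)
    have h2 : Complex.I • (σx ⊗ₖ I₂) ∈ L := LieSubalgebra.subset_lieSpan (by simp)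
    have h3 : Complex.I • (I₂ ⊗ₖ σx) ∈ L := LieSubalgebra.subset_lieSpan (by simp)
    have he1 : e1 ∈ L := by rw [e1_eq]; exact L.smul_mem _ h1
    have he2 : e2 ∈ L := by rw [e2_eq]; exact L.smul_mem _ h2
    have he3 : e3 ∈ L := by rw [e3_eq]; exact L.smul_mem _ h3
    have he4 : e4 ∈ L := by
      have h := L.lie_mem he1 he2
      rw [br_1_2] at h
      simpa using neg_mem h
    have he5 : e5 ∈ L := by
      have h := L.lie_mem he1 he3
      rw [br_1_3] at h
      simpa using neg_mem h
    have he6 : e6 ∈ L := by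
      have h := L.lie_mem he2 he5
      rwa [br_2_5] at h
    intro x hx
    have hsub : gSet ⊆ (L : Set M4) := by
      intro y hy
      simp only [gSet, Set.mem_insert_iff, Set.mem_singleton_iff] at hy
      rcases hy with rfl | rfl | rfl | rfl | rfl | rfl
      exacts [he1, he2, he3, he4, he5, he6]
    exact Submodule.span_le.mpr hsub hx


noncomputable def F : Matrix (Fin 4) (Fin 4) ℝ →ₗ[ℝ] M4 where
  toFun X := X 0 1 • e1 + X 0 2 • e2 + X 1 3 • e3 + X 1 2 • e4 - X 0 3 • e5 + X 2 3 • e6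
  map_add' X Y := by
    simp only [Matrix.add_apply, add_smul]
    abel
  map_smul' c X := by
    simp only [Matrix.smul_apply, smul_eq_mul, RingHom.id_apply]
    module

set_option maxHeartbeats 2000000 in
lemma F_lie (X Y : Matrix (Fin 4) (Fin 4) ℝ) (hX : Xᵀ = -X) (hY : Yᵀ = -Y) :
    F ⁅X, Y⁆ = ⁅F X, F Y⁆ := by
  have hX' : ∀ i j, X j i = -X i j := fun i j => by
    simpa using congrFun (congrFun hX i) j
  have hY' : ∀ i j, Y j i = -Y i j := fun i j => by
    simpa using congrFun (congrFun hY i) j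
  have dx0 : X 0 0 = 0 := by have := hX' 0 0; linarith
  have dx1 : X 1 1 = 0 := by have := hX' 1 1; linarith
  have dx2 : X 2 2 = 0 := by have := hX' 2 2; linarith
  have dx3 : X 3 3 = 0 := by have := hX' 3 3; linarith
  have dy0 : Y 0 0 = 0 := by have := hY' 0 0; linarith
  have dy1 : Y 1 1 = 0 := by have := hY' 1 1; linarith
  have dy2 : Y 2 2 = 0 := by have := hY' 2 2; linarith
  have dy3 : Y 3 3 = 0 := by have := hY' 3 3; linarith
  have hx10 := hX' 0 1
  have hx20 := hX' 0 2
  have hx30 := hX' 0 3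
  have hx21 := hX' 1 2
  have hx31 := hX' 1 3
  have hx32 := hX' 2 3
  have hy10 := hY' 0 1
  have hy20 := hY' 0 2
  have hy30 := hY' 0 3
  have hy21 := hY' 1 2
  have hy31 := hY' 1 3
  have hy32 := hY' 2 3
  rw [Ring.lie_def, map_sub]
  simp only [F, LinearMap.coe_mk, AddHom.coe_mk, Matrix.mul_apply, Fin.sum_univ_four]
  simp only [sub_lie, lie_sub, add_lie, lie_add, smul_lie, lie_smul, lie_self,
    br_1_2, br_1_3, br_1_4, br_1_5, br_1_6, br_2_3, br_2_4, br_2_5,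
    br_2_6, br_3_4, br_3_5, br_3_6, br_4_5, br_4_6, br_5_6, br_2_1, br_3_1, br_4_1,
    br_5_1, br_6_1, br_3_2, br_4_2, br_5_2, br_6_2, br_4_3, br_5_3, br_6_3, br_5_4,
    br_6_4, br_6_5]
  simp only [hx10, hx20, hx30, hx21, hx31, hx32, hy10, hy20, hy30, hy21, hy31, hy32,
    dx0, dx1, dx2, dx3, dy0, dy1, dy2, dy3]
  module

lemma F_mem (X : Matrix (Fin 4) (Fin 4) ℝ) : F X ∈ Kspan := by
  show X 0 1 • e1 + X 0 2 • e2 + X 1 3 • e3 + X 1 2 • e4 - X 0 3 • e5 + X 2 3 • e6 ∈ Kspan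
  exact Kspan.add_mem
    (Kspan.sub_mem
      (Kspan.add_mem
        (Kspan.add_mem
          (Kspan.add_mem (Kspan.smul_mem _ me1) (Kspan.smul_mem _ me2))
          (Kspan.smul_mem _ me3))
        (Kspan.smul_mem _ me4))
      (Kspan.smul_mem _ me5))
    (Kspan.smul_mem _ me6)

lemma F_inj (X : Matrix (Fin 4) (Fin 4) ℝ) (hX : Xᵀ = -X) (h : F X = 0) : X = 0 := by
  have hX' : ∀ i j, X j i = -X i j := fun i j => by
    simpa using congrFun (congrFun hX i) j
  have c1 := congrFun (congrFun h ((0 : Fin 2), (0 : Fin 2))) ((0 : Fin 2), (0 : Fin 2))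
  have c2 := congrFun (congrFun h ((0 : Fin 2), (0 : Fin 2))) ((1 : Fin 2), (0 : Fin 2))
  have c3 := congrFun (congrFun h ((0 : Fin 2), (0 : Fin 2))) ((0 : Fin 2), (1 : Fin 2))
  have c4 := congrFun (congrFun h ((0 : Fin 2), (0 : Fin 2))) ((1 : Fin 2), (1 : Fin 2))
  simp only [F, LinearMap.coe_mk, AddHom.coe_mk, e1, e2, e3, e4, e5, e6, σx, σy, σz, I₂,
    Matrix.add_apply, Matrix.sub_apply, Matrix.smul_apply, Matrix.kroneckerMap_apply,
    Matrix.zero_apply, Matrix.one_apply, Complex.real_smul, Complex.ext_iff] at c1 c2 c3 c4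
  norm_num at c1 c2 c3 c4
  obtain ⟨c2a, c2b⟩ := c2
  obtain ⟨c3a, c3b⟩ := c3
  have d0 : X 0 0 = 0 := by have := hX' 0 0; linarith
  have d1 : X 1 1 = 0 := by have := hX' 1 1; linarith
  have d2 : X 2 2 = 0 := by have := hX' 2 2; linarith
  have d3 : X 3 3 = 0 := by have := hX' 3 3; linarith
  have l10 : X 1 0 = 0 := by have := hX' 0 1; rw [this, c1, neg_zero]
  have l20 : X 2 0 = 0 := by have := hX' 0 2; rw [this, c2b, neg_zero]
  have l30 : X 3 0 = 0 := by have := hX' 0 3; rw [this, c3a, neg_zero]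
  have l21 : X 2 1 = 0 := by have := hX' 1 2; rw [this, c2a, neg_zero]
  have l31 : X 3 1 = 0 := by have := hX' 1 3; rw [this, c3b, neg_zero]
  have l32 : X 3 2 = 0 := by have := hX' 2 3; rw [this, c4, neg_zero]
  ext i j
  rw [Matrix.zero_apply]
  fin_cases i <;> fin_cases j <;>
    first
      | exact c1 | exact c2a | exact c2b | exact c3a | exact c3b | exact c4
      | exact d0 | exact d1 | exact d2 | exact d3
      | exact l10 | exact l20 | exact l30 | exact l21 | exact l31 | exact l32

lemma F_surj : ∀ v ∈ Kspan, ∃ X : Matrix (Fin 4) (Fin 4) ℝ, Xᵀ = -X ∧ F X = v := by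
  intro v hv
  refine Submodule.span_induction
    (p := fun v _ => ∃ X : Matrix (Fin 4) (Fin 4) ℝ, Xᵀ = -X ∧ F X = v) ?_ ?_ ?_ ?_ hv
  · intro x hx
    simp only [gSet, Set.mem_insert_iff, Set.mem_singleton_iff] at hx
    rcases hx with rfl | rfl | rfl | rfl | rfl | rfl
    · exact ⟨!![0,1,0,0; -1,0,0,0; 0,0,0,0; 0,0,0,0], by ext i j; fin_cases i <;> fin_cases j <;> norm_num,
        by show _ • e1 + _ • e2 + _ • e3 + _ • e4 - _ • e5 + _ • e6 = e1; simp [Matrix.vecHead, Matrix.vecTail]⟩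
    · exact ⟨!![0,0,1,0; 0,0,0,0; -1,0,0,0; 0,0,0,0], by ext i j; fin_cases i <;> fin_cases j <;> norm_num,
        by show _ • e1 + _ • e2 + _ • e3 + _ • e4 - _ • e5 + _ • e6 = e2; simp [Matrix.vecHead, Matrix.vecTail]⟩
    · exact ⟨!![0,0,0,0; 0,0,0,1; 0,0,0,0; 0,-1,0,0], by ext i j; fin_cases i <;> fin_cases j <;> norm_num,
        by show _ • e1 + _ • e2 + _ • e3 + _ • e4 - _ • e5 + _ • e6 = e3; simp [Matrix.vecHead, Matrix.vecTail]⟩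
    · exact ⟨!![0,0,0,0; 0,0,1,0; 0,-1,0,0; 0,0,0,0], by ext i j; fin_cases i <;> fin_cases j <;> norm_num,
        by show _ • e1 + _ • e2 + _ • e3 + _ • e4 - _ • e5 + _ • e6 = e4; simp [Matrix.vecHead, Matrix.vecTail]⟩
    · exact ⟨!![0,0,0,-1; 0,0,0,0; 0,0,0,0; 1,0,0,0], by ext i j; fin_cases i <;> fin_cases j <;> norm_num,
        by show _ • e1 + _ • e2 + _ • e3 + _ • e4 - _ • e5 + _ • e6 = e5; simp [Matrix.vecHead, Matrix.vecTail]⟩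
    · exact ⟨!![0,0,0,0; 0,0,0,0; 0,0,0,1; 0,0,-1,0], by ext i j; fin_cases i <;> fin_cases j <;> norm_num,
        by show _ • e1 + _ • e2 + _ • e3 + _ • e4 - _ • e5 + _ • e6 = e6; simp [Matrix.vecHead, Matrix.vecTail]⟩
  · exact ⟨0, by simp, by simp⟩
  · rintro x y _ _ ⟨X, hX, hFX⟩ ⟨Y, hY, hFY⟩
    exact ⟨X + Y, by rw [Matrix.transpose_add, hX, hY, neg_add], by rw [map_add, hFX, hFY]⟩
  · rintro r x _ ⟨X, hX, hFX⟩
    exact ⟨r • X, by rw [Matrix.transpose_smul, hX, smul_neg], by rw [_root_.map_smul, hFX]⟩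

lemma mem_so4 (A : Matrix (Fin 4) (Fin 4) ℝ) :
    A ∈ skewAdjointMatricesLieSubalgebra (1 : Matrix (Fin 4) (Fin 4) ℝ) ↔ Aᵀ = -A := by
  rw [mem_skewAdjointMatricesLieSubalgebra]
  simp [Matrix.IsSkewAdjoint, Matrix.IsAdjointPair]

noncomputable def f : skewAdjointMatricesLieSubalgebra (1 : Matrix (Fin 4) (Fin 4) ℝ) →ₗ⁅ℝ⁆ K where
  toFun x := ⟨F x.1, F_mem x.1⟩
  map_add' x y := by
    apply Subtype.ext
    show F (x.1 + y.1) = F x.1 + F y.1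
    rw [map_add]
  map_smul' c x := by
    apply Subtype.ext
    show F (c • x.1) = c • F x.1
    rw [_root_.map_smul]
  map_lie' {x y} := by
    apply Subtype.ext
    show F ⁅x.1, y.1⁆ = ⁅F x.1, F y.1⁆
    exact F_lie _ _ ((mem_so4 _).mp x.2) ((mem_so4 _).mp y.2)

lemma f_bij : Function.Bijective f := by
  constructor
  · intro a b hab
    have h : F a.1 = F b.1 := congrArg Subtype.val hab
    have h0 : F (a.1 - b.1) = 0 := by rw [map_sub, h, sub_self]
    have hsk : (a.1 - b.1)ᵀ = -(a.1 - b.1) := by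
      rw [Matrix.transpose_sub, (mem_so4 _).mp a.2, (mem_so4 _).mp b.2, neg_sub]
      abel
    have := F_inj _ hsk h0
    exact Subtype.ext (sub_eq_zero.mp this)
  · rintro ⟨v, hv⟩
    obtain ⟨X, hskew, hFX⟩ := F_surj v hv
    exact ⟨⟨X, (mem_so4 X).mpr hskew⟩, Subtype.ext hFX⟩

noncomputable def iso :
    (skewAdjointMatricesLieSubalgebra (1 : Matrix (Fin 4) (Fin 4) ℝ)) ≃ₗ⁅ℝ⁆ K :=
  LieEquiv.ofBijective f f_bij

end TwoQubitSO4

open TwoQubitSO4 in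
theorem lieSpan_two_qubit_iso_so4 :
    Nonempty
      ((LieSubalgebra.lieSpan ℝ (Matrix (Fin 2 × Fin 2) (Fin 2 × Fin 2) ℂ)
          {Complex.I • (σz ⊗ₖ σz), Complex.I • (σx ⊗ₖ I₂), Complex.I • (I₂ ⊗ₖ σx)})
        ≃ₗ⁅ℝ⁆ skewAdjointMatricesLieSubalgebra (1 : Matrix (Fin 4) (Fin 4) ℝ)) :=
  ⟨(LieEquiv.ofEq _ _ (by rw [lieSpan_eq])).trans iso.symm⟩
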